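/- For all x > 0 and λ ∈ (0,1), Γ(x+1)/Γ(x+λ) > (x + λ/2)^{1-λ}. -/

import Mathlib

open Real Set Filter

private lemma kershaw_lemA (a : ℝ) (ha : 1/2 < a) :
    StrictConvexOn ℝ (Set.Icc (0:ℝ) (1/2)) (fun t => Real.log (a+t) - Real.log (a-t)) := by
  have ha0 : (0:ℝ) < a := lt_trans (by norm_num) ha
  have hderiv : ∀ t ∈ Set.Ioo (-a) a,
      HasDerivAt (fun t => Real.log (a+t) - Real.log (a-t)) ((a+t)⁻¹ + (a-t)⁻¹) t := by
    intro t ht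
    have h1 : 0 < a + t := by linarith [ht.1]
    have h2 : 0 < a - t := by linarith [ht.2]
    have d1 : HasDerivAt (fun t : ℝ => Real.log (a+t)) ((a+t)⁻¹ * 1) t :=
      (Real.hasDerivAt_log h1.ne').comp t ((hasDerivAt_id t).const_add a)
    have d2 : HasDerivAt (fun t : ℝ => Real.log (a-t)) ((a-t)⁻¹ * (-1)) t :=
      (Real.hasDerivAt_log h2.ne').comp t ((hasDerivAt_id t).neg.const_add a)
    have := d1.sub d2
    refine this.congr_deriv ?_
    ring
  apply strictConvexOn_of_deriv2_pos (convex_Icc _ _)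
  · apply ContinuousOn.sub
    · apply Real.continuousOn_log.comp (by fun_prop)
      intro t ht
      simp only [Set.mem_Icc] at ht
      have : 0 < a + t := by linarith [ht.1]
      exact this.ne'
    · apply Real.continuousOn_log.comp (by fun_prop)
      intro t ht
      simp only [Set.mem_Icc] at ht
      have : 0 < a - t := by linarith [ht.2]
      exact this.ne'
  · intro x hx
    rw [interior_Icc] at hx
    have hx1 : 0 < x := hx.1
    have hx2 : x < a := lt_trans hx.2 ha
    have hxa : -a < x := by linarith
    have heq : deriv (fun t => Real.log (a+t) - Real.log (a-t)) =ᶠ[nhds x]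
        (fun t => (a+t)⁻¹ + (a-t)⁻¹) := by
      filter_upwards [Ioo_mem_nhds hxa hx2] with t ht
      exact (hderiv t ht).deriv
    have h1 : 0 < a + x := by linarith
    have h2 : 0 < a - x := by linarith
    have d1 : HasDerivAt (fun t : ℝ => (a+t)⁻¹) (-((a+x)^2)⁻¹ * 1) x :=
      (hasDerivAt_inv h1.ne').comp x ((hasDerivAt_id x).const_add a)
    have d2 : HasDerivAt (fun t : ℝ => (a-t)⁻¹) (-((a-x)^2)⁻¹ * (-1)) x :=
      (hasDerivAt_inv h2.ne').comp x ((hasDerivAt_id x).neg.const_add a)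
    have dd : HasDerivAt (fun t => (a+t)⁻¹ + (a-t)⁻¹)
        (-((a+x)^2)⁻¹ * 1 + -((a-x)^2)⁻¹ * (-1)) x := d1.add d2
    have hcalc : deriv^[2] (fun t => Real.log (a+t) - Real.log (a-t)) x
        = -((a+x)^2)⁻¹ * 1 + -((a-x)^2)⁻¹ * (-1) := by
      rw [Function.iterate_succ, Function.iterate_one, Function.comp_apply]
      rw [Filter.EventuallyEq.deriv_eq heq]
      exact dd.deriv
    rw [hcalc]
    have : ((a-x)^2)⁻¹ > ((a+x)^2)⁻¹ := by
      apply inv_strictAnti₀ (by positivity)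
      nlinarith
    nlinarith

private lemma kershaw_lemB (a h : ℝ) (ha : 1/2 < a) (h0 : 0 < h) (h12 : h < 1/2) :
    Real.log (a+h) - Real.log (a-h) < 2*h*(Real.log (a+1/2) - Real.log (a-1/2)) := by
  have hA := kershaw_lemA a ha
  have key := hA.2 (Set.mem_Icc.2 ⟨le_refl 0, by norm_num⟩)
    (Set.mem_Icc.2 ⟨by norm_num, le_refl _⟩) (by norm_num)
    (show (0:ℝ) < 1 - 2*h by linarith) (show (0:ℝ) < 2*h by linarith) (by ring)
  rw [show (1 - 2*h) • (0:ℝ) + (2*h) • (1/2:ℝ) = h by simp only [smul_eq_mul]; ring] at key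
  simp only [smul_eq_mul, add_zero, sub_zero] at key
  calc Real.log (a+h) - Real.log (a-h)
      < (1-2*h) * (Real.log a - Real.log a) + 2*h*(Real.log (a+1/2) - Real.log (a-1/2)) := key
    _ = 2*h*(Real.log (a+1/2) - Real.log (a-1/2)) := by ring

private lemma kershaw_lemC (y s : ℝ) (hy : 0 < y) (hs0 : 0 < s) (hs1 : s < 1) :
    Real.Gamma (y+1) / Real.Gamma (y+s) ≥ y ^ (1-s) := by
  have hGy : 0 < Real.Gamma y := Real.Gamma_pos_of_pos hy
  have hGy1 : 0 < Real.Gamma (y+1) := Real.Gamma_pos_of_pos (by linarith)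
  have hGys : 0 < Real.Gamma (y+s) := Real.Gamma_pos_of_pos (by linarith)
  have hconv := Real.convexOn_log_Gamma.2 (Set.mem_Ioi.2 hy)
    (Set.mem_Ioi.2 (show (0:ℝ) < y+1 by linarith))
    (show (0:ℝ) ≤ 1-s by linarith) (le_of_lt hs0) (by ring)
  rw [show (1-s) • y + s • (y+1) = y + s by simp only [smul_eq_mul]; ring] at hconv
  simp only [Function.comp_apply, smul_eq_mul] at hconv
  have key : Real.Gamma (y+s) ≤ Real.Gamma y ^ (1-s) * Real.Gamma (y+1) ^ s := by
    have h2 := Real.exp_le_exp.2 hconv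
    rwa [Real.exp_log hGys, Real.exp_add, mul_comm (1-s) _, mul_comm s _,
      Real.exp_mul, Real.exp_mul, Real.exp_log hGy, Real.exp_log hGy1] at h2
  have hrw : Real.Gamma (y+1) = y * Real.Gamma y := Real.Gamma_add_one hy.ne'
  rw [ge_iff_le, le_div_iff₀ hGys]
  calc y ^ (1-s) * Real.Gamma (y+s)
      ≤ y ^ (1-s) * (Real.Gamma y ^ (1-s) * Real.Gamma (y+1) ^ s) :=
        mul_le_mul_of_nonneg_left key (Real.rpow_nonneg hy.le _)
    _ = Real.Gamma (y+1) := by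
        rw [hrw, Real.mul_rpow hy.le hGy.le]
        rw [show y ^ (1-s) * (Real.Gamma y ^ (1-s) * (y ^ s * Real.Gamma y ^ s))
            = (y ^ (1-s) * y ^ s) * (Real.Gamma y ^ (1-s) * Real.Gamma y ^ s) by ring]
        rw [← Real.rpow_add hy, ← Real.rpow_add hGy]
        norm_num

private lemma kershaw_lemD (y s : ℝ) (hy : 0 < y) (hs0 : 0 < s) (hs1 : s < 1) :
    Real.Gamma ((y+1)+1) / Real.Gamma ((y+1)+s) * ((y+1)+s/2) ^ (s-1)
      < Real.Gamma (y+1) / Real.Gamma (y+s) * (y+s/2) ^ (s-1) := by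
  have hGy1 : 0 < Real.Gamma (y+1) := Real.Gamma_pos_of_pos (by linarith)
  have hGys : 0 < Real.Gamma (y+s) := Real.Gamma_pos_of_pos (by linarith)
  have hp1 : (0:ℝ) < y+1 := by linarith
  have hps : (0:ℝ) < y+s := by linarith
  have hp2 : (0:ℝ) < y+s/2 := by linarith
  have hp3 : (0:ℝ) < y+1+s/2 := by linarith
  have hB := kershaw_lemB (y + (1+s)/2) ((1-s)/2) (by linarith) (by linarith) (by linarith)
  rw [show y + (1+s)/2 + (1-s)/2 = y+1 by ring, show y + (1+s)/2 - (1-s)/2 = y+s by ring,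
    show y + (1+s)/2 + 1/2 = y+1+s/2 by ring, show y + (1+s)/2 - 1/2 = y+s/2 by ring] at hB
  -- hB : log(y+1) - log(y+s) < 2*((1-s)/2)*(log(y+1+s/2) - log(y+s/2))
  have r1 : Real.Gamma ((y+1)+1) = (y+1) * Real.Gamma (y+1) := Real.Gamma_add_one hp1.ne'
  have r2 : Real.Gamma ((y+1)+s) = (y+s) * Real.Gamma (y+s) := by
    rw [show (y+1)+s = (y+s)+1 by ring]
    exact Real.Gamma_add_one hps.ne'
  rw [r1, r2]
  have key : (y+1)/(y+s) * ((y+1)+s/2) ^ (s-1) < (y+s/2) ^ (s-1) := by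
    have e1 : ((y+1)+s/2 : ℝ) ^ (s-1) = Real.exp (Real.log (y+1+s/2) * (s-1)) :=
      Real.rpow_def_of_pos hp3 _
    have e2 : (y+s/2 : ℝ) ^ (s-1) = Real.exp (Real.log (y+s/2) * (s-1)) :=
      Real.rpow_def_of_pos hp2 _
    have e3 : (y+1)/(y+s) = Real.exp (Real.log (y+1) - Real.log (y+s)) := by
      rw [Real.exp_sub, Real.exp_log hp1, Real.exp_log hps]
    rw [e1, e2, e3, ← Real.exp_add]
    apply Real.exp_lt_exp.2
    nlinarith [hB]
  calc (y+1) * Real.Gamma (y+1) / ((y+s) * Real.Gamma (y+s)) * ((y+1)+s/2) ^ (s-1)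
      = (Real.Gamma (y+1) / Real.Gamma (y+s)) * ((y+1)/(y+s) * ((y+1)+s/2) ^ (s-1)) := by
        field_simp
    _ < (Real.Gamma (y+1) / Real.Gamma (y+s)) * (y+s/2) ^ (s-1) := by
        apply mul_lt_mul_of_pos_left key (by positivity)

private lemma kershaw_lemE (y s : ℝ) (hy : 0 < y) (hs0 : 0 < s) (hs1 : s < 1) :
    1 ≤ Real.Gamma (y+1) / Real.Gamma (y+s) * (y+s/2) ^ (s-1) := by
  set F : ℝ → ℝ := fun z => Real.Gamma (z+1) / Real.Gamma (z+s) * (z+s/2) ^ (s-1) with hF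
  have mono : ∀ n : ℕ, F (y + n) ≤ F y := by
    intro n
    induction n with
    | zero => simp
    | succ n ih =>
      have step := kershaw_lemD (y + n) s (by positivity) hs0 hs1
      have : F (y + (n+1:ℕ)) = F ((y + n) + 1) := by push_cast; ring_nf
      rw [this]
      exact le_trans (le_of_lt step) ih
  have lower : ∀ n : ℕ, ((y+n)/(y+n+s/2)) ^ (1-s) ≤ F (y + n) := by
    intro n
    have hyn : (0:ℝ) < y + n := by positivity
    have hyns : (0:ℝ) < y + n + s/2 := by linarith
    have hC := kershaw_lemC (y+n) s hyn hs0 hs1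
    have e1 : ((y+n)/(y+n+s/2) : ℝ) ^ (1-s) = (y+n) ^ (1-s) * (y+n+s/2) ^ (s-1) := by
      rw [Real.div_rpow hyn.le hyns.le, show (s-1 : ℝ) = -(1-s) by ring,
        Real.rpow_neg hyns.le, div_eq_mul_inv]
    rw [e1, hF]
    exact mul_le_mul_of_nonneg_right hC (by positivity)
  have htop : Tendsto (fun n : ℕ => y + (n:ℝ) + s/2) atTop atTop := by
    apply tendsto_atTop_add_const_right
    exact tendsto_atTop_add_const_left _ _ tendsto_natCast_atTop_atTop
  have hzero : Tendsto (fun n : ℕ => (s/2) * (y + (n:ℝ) + s/2)⁻¹) atTop (nhds 0) := by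
    have := htop.inv_tendsto_atTop
    simpa using this.const_mul (s/2)
  have hbase : Tendsto (fun n : ℕ => ((y+(n:ℝ))/(y+(n:ℝ)+s/2))) atTop (nhds 1) := by
    have heq : ∀ n : ℕ, ((y+(n:ℝ))/(y+(n:ℝ)+s/2)) = 1 - (s/2) * (y + (n:ℝ) + s/2)⁻¹ := by
      intro n
      have hyns : (0:ℝ) < y + n + s/2 := by positivity
      field_simp
      ring
    simp only [heq]
    simpa using hzero.const_sub 1
  have hlim : Tendsto (fun n : ℕ => ((y+(n:ℝ))/(y+(n:ℝ)+s/2)) ^ (1-s)) atTop (nhds 1) := by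
    have := hbase.rpow_const (p := 1-s) (Or.inr (by linarith))
    simpa using this
  exact le_of_tendsto' hlim (fun n => le_trans (lower n) (mono n))

theorem stmt_6 (x l : ℝ) (hx : 0 < x) (hl : l ∈ Set.Ioo (0 : ℝ) 1) :
    Real.Gamma (x + 1) / Real.Gamma (x + l) > (x + l / 2) ^ (1 - l) := by
  obtain ⟨hl0, hl1⟩ := hl
  have h1 : 1 ≤ Real.Gamma ((x+1)+1) / Real.Gamma ((x+1)+l) * ((x+1)+l/2) ^ (l-1) := by
    have := kershaw_lemE (x+1) l (by linarith) hl0 hl1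
    convert this using 3
  have hD := kershaw_lemD x l hx hl0 hl1
  have key : 1 < Real.Gamma (x+1) / Real.Gamma (x+l) * (x+l/2) ^ (l-1) :=
    lt_of_le_of_lt h1 hD
  have hp : (0:ℝ) < x + l/2 := by linarith
  have hBpos : (0:ℝ) < (x+l/2) ^ (1-l) := Real.rpow_pos_of_pos hp _
  have hinv : (x+l/2) ^ (l-1) * (x+l/2) ^ (1-l) = 1 := by
    rw [← Real.rpow_add hp]; norm_num
  calc (x+l/2) ^ (1-l) = 1 * (x+l/2) ^ (1-l) := (one_mul _).symm
    _ < (Real.Gamma (x+1) / Real.Gamma (x+l) * (x+l/2) ^ (l-1)) * (x+l/2) ^ (1-l) :=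
        mul_lt_mul_of_pos_right key hBpos
    _ = Real.Gamma (x+1) / Real.Gamma (x+l) := by
        rw [mul_assoc, hinv, mul_one]
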